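/- arXiv:1404.4861 — 5 statements merged into one kernel-verified Lean document; each statement's English description precedes it below -/
import Mathlib

section
/- Consider the integrable first-order resonance Hamiltonian on ℂ², H(x₁,x₂) = K(|x₁|² + |x₂|²) + R₁(x₁ + conj(x₁)) + R₀(x₂ + conj(x₂)), where K : ℝ → ℝ is differentiable and R₀, R₁ are real constants, with equations of motion ẋ₁ = i(K'(|x₁|²+|x₂|²)·x₁ + R₁) and ẋ₂ = i(K'(|x₁|²+|x₂|²)·x₂ + R₀). Then along any solution (x₁(t), x₂(t)) of these equations, the quantity |R₀·x₁(t) − R₁·x₂(t)|² is constant in t (this is the Sessin–Henrard–Wisdom reduction: the second rotated mode's action u₂·conj(u₂) is a first integral, making the first-order resonance model integrable). -/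
open Complex

/-- Sessin–Henrard–Wisdom reduction: for the first-order resonance Hamiltonian
`H = K(|x₁|² + |x₂|²) + R₁(x₁ + conj x₁) + R₀(x₂ + conj x₂)`, the quantity
`|R₀·x₁ − R₁·x₂|²` (the action of the second rotated mode) is a first integral. -/
theorem first_order_resonance_integrable
    (x₁ x₂ : ℝ → ℂ) (K : ℝ → ℝ) (R₀ R₁ : ℝ)
    (hK : Differentiable ℝ K)
    (hx₁ : ∀ t, HasDerivAt x₁
      (Complex.I * (((deriv K (normSq (x₁ t) + normSq (x₂ t)) : ℝ) : ℂ) * x₁ t + (R₁ : ℂ))) t)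
    (hx₂ : ∀ t, HasDerivAt x₂
      (Complex.I * (((deriv K (normSq (x₁ t) + normSq (x₂ t)) : ℝ) : ℂ) * x₂ t + (R₀ : ℂ))) t) :
    ∀ t s : ℝ, normSq ((R₀ : ℂ) * x₁ t - (R₁ : ℂ) * x₂ t)
      = normSq ((R₀ : ℂ) * x₁ s - (R₁ : ℂ) * x₂ s) := by
  set u : ℝ → ℂ := fun t => (R₀ : ℂ) * x₁ t - (R₁ : ℂ) * x₂ t with hu
  have hu' : ∀ t, HasDerivAt u
      (Complex.I * (((deriv K (normSq (x₁ t) + normSq (x₂ t)) : ℝ) : ℂ) * u t)) t := by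
    intro t
    have h := ((hx₁ t).const_mul (R₀ : ℂ)).sub ((hx₂ t).const_mul (R₁ : ℂ))
    refine h.congr_deriv ?_
    simp only [hu]
    ring
  have key : ∀ t, HasDerivAt (fun t => u t * (starRingEnd ℂ) (u t)) 0 t := by
    intro t
    have hc : HasDerivAt (fun t => (starRingEnd ℂ) (u t))
        ((starRingEnd ℂ) (Complex.I * (((deriv K (normSq (x₁ t) + normSq (x₂ t)) : ℝ) : ℂ) * u t))) t :=
      by simpa only [← starRingEnd_apply] using (hu' t).star
    have := (hu' t).mul hc
    refine this.congr_deriv ?_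
    simp only [map_mul, Complex.conj_I, Complex.conj_ofReal]
    ring
  have hconst : ∀ t s : ℝ, u t * (starRingEnd ℂ) (u t) = u s * (starRingEnd ℂ) (u s) := by
    intro t s
    exact is_const_of_deriv_eq_zero (fun x => (key x).differentiableAt)
      (fun x => (key x).deriv) t s
  intro t s
  have h := hconst t s
  have e : ∀ r : ℝ, (normSq (u r) : ℂ) = u r * (starRingEnd ℂ) (u r) := by
    intro r; rw [Complex.mul_conj]
  have : (normSq (u t) : ℂ) = (normSq (u s) : ℂ) := by rw [e, e, h]
  exact_mod_cast this
end

section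
/- For the simplified resonant model of a (p+q):p mean-motion resonance of order q ≥ 1, with equation of motion u̇ = i(2u(δ − |u|²) + qR·conj(u)^{q−1}) on ℂ and R ≠ 0: if u ≠ 0 is an equilibrium point (i.e. 2u(δ − |u|²) + qR·conj(u)^{q−1} = 0), then conj(u)^q is real; consequently, writing u = √D·e^{iθ} with D = |u|² > 0, there exists an integer k such that θ = kπ/q and D satisfies δ − D + (−1)^k·(q/2)·R·D^{q/2−1} = 0. -/
open Complex Real

/-- Nonzero equilibria of the simplified resonant model of an order-`q` MMR:
if `u ≠ 0` satisfies `2u(δ − |u|²) + qR·conj(u)^(q−1) = 0` then `conj(u)^q` is real,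
the argument of `u` equals `kπ/q` for some integer `k`, and the action `D = |u|²`
satisfies `δ − D + (−1)^k (q/2) R D^(q/2−1) = 0`. -/
theorem nonzero_equilibria_of_resonant_model
    (δ R : ℝ) (hR : R ≠ 0) (q : ℕ) (hq : 1 ≤ q) (u : ℂ) (hu : u ≠ 0)
    (heq : 2 * u * ((δ : ℂ) - (normSq u : ℂ))
      + (q : ℂ) * (R : ℂ) * (starRingEnd ℂ u) ^ (q - 1) = 0) :
    ((starRingEnd ℂ u) ^ q).im = 0 ∧
    ∃ k : ℤ, Complex.arg u = k * π / q ∧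
      δ - normSq u + (-1 : ℝ) ^ k * ((q : ℝ) / 2) * R
        * (normSq u : ℝ) ^ ((q : ℝ) / 2 - 1) = 0 := by
  set D : ℝ := normSq u with hD
  have hD0 : 0 < D := normSq_pos.2 hu
  have hqn : q ≠ 0 := by omega
  have hq0 : (q : ℝ) ≠ 0 := Nat.cast_ne_zero.2 hqn
  have hqC : ((q : ℂ)) ≠ 0 := Nat.cast_ne_zero.2 hqn
  have hRC : (R : ℂ) ≠ 0 := Complex.ofReal_ne_zero.2 hR
  -- multiply equation by conj u
  have key : (2 * D * (δ - D) : ℂ) + (q : ℂ) * R * (starRingEnd ℂ u) ^ q = 0 := by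
    have h := congrArg (· * starRingEnd ℂ u) heq
    simp only [add_mul, zero_mul] at h
    rw [mul_assoc ((q:ℂ) * R), ← pow_succ, Nat.sub_add_cancel hq] at h
    linear_combination h - 2 * ((δ : ℂ) - (D : ℂ)) * (Complex.mul_conj u)
  have hw : (starRingEnd ℂ u) ^ q = (((-(2*D*(δ-D))/((q:ℝ)*R)) : ℝ) : ℂ) := by
    push_cast
    rw [eq_div_iff (mul_ne_zero hqC hRC)]
    linear_combination key
  have him : ((starRingEnd ℂ u) ^ q).im = 0 := by rw [hw]; exact Complex.ofReal_im _
  refine ⟨him, ?_⟩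
  -- polar form
  have hpol : u = (‖u‖ : ℂ) * Complex.exp (Complex.arg u * I) :=
    (Complex.norm_mul_exp_arg_mul_I u).symm
  have huq : u ^ q = ((‖u‖ ^ q : ℝ) : ℂ)
      * Complex.exp (((q : ℝ) * Complex.arg u : ℝ) * I) := by
    conv_lhs => rw [hpol]
    rw [mul_pow, ← Complex.exp_nat_mul]
    push_cast
    ring_nf
  have himu : (u ^ q).im = 0 := by
    have h1 : ((starRingEnd ℂ) (u ^ q)).im = -(u ^ q).im := Complex.conj_im _
    rw [map_pow] at h1
    linarith [him, h1]
  have hsin : Real.sin ((q : ℝ) * Complex.arg u) = 0 := by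
    have h2 : (u ^ q).im = ‖u‖ ^ q * Real.sin ((q : ℝ) * Complex.arg u) := by
      rw [huq]
      simp only [Complex.mul_im, Complex.ofReal_re, Complex.ofReal_im,
        Complex.exp_ofReal_mul_I_im, Complex.exp_ofReal_mul_I_re, zero_mul, add_zero]
    rw [himu] at h2
    rcases mul_eq_zero.mp h2.symm with h | h
    · exact absurd h (pow_ne_zero q (norm_ne_zero_iff.mpr hu))
    · exact h
  obtain ⟨k, hk⟩ := Real.sin_eq_zero_iff.1 hsin
  refine ⟨k, by field_simp; linarith [hk], ?_⟩
  have hcos : Real.cos ((q : ℝ) * Complex.arg u) = (-1 : ℝ) ^ k := by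
    rw [← hk]
    simpa using Real.cos_add_int_mul_pi 0 k
  have habs : (‖u‖) ^ q = D ^ ((q : ℝ) / 2) := by
    have h1 : ‖u‖ = D ^ ((1:ℝ)/2) := by
      rw [← Real.sqrt_eq_rpow, Complex.norm_def]
    rw [h1, ← Real.rpow_natCast (D ^ ((1:ℝ)/2)) q, ← Real.rpow_mul hD0.le]
    congr 1
    ring
  have huqval : u ^ q = ((D ^ ((q : ℝ) / 2) * (-1 : ℝ) ^ k : ℝ) : ℂ) := by
    rw [huq, Complex.exp_mul_I, ← Complex.ofReal_cos, ← Complex.ofReal_sin, hsin, hcos, habs]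
    push_cast
    ring
  have hconj : (starRingEnd ℂ u) ^ q = ((D ^ ((q : ℝ) / 2) * (-1 : ℝ) ^ k : ℝ) : ℂ) := by
    rw [← map_pow, huqval, Complex.conj_ofReal]
  rw [hconj] at key
  have keyR : 2 * D * (δ - D) + (q : ℝ) * R * (D ^ ((q : ℝ) / 2) * (-1 : ℝ) ^ k) = 0 := by
    exact_mod_cast key
  have hsplit : D ^ ((q : ℝ) / 2) = D * D ^ ((q : ℝ) / 2 - 1) := by
    have h := Real.rpow_add hD0 1 ((q : ℝ)/2 - 1)
    simp only [Real.rpow_one] at h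
    rw [← h]
    norm_num
  rw [hsplit] at keyR
  have h2D : (2 * D) ≠ 0 := by positivity
  have goal2 : (2 * D) * (δ - D + (-1 : ℝ) ^ k * ((q : ℝ) / 2) * R
      * D ^ ((q : ℝ) / 2 - 1)) = 0 := by linear_combination keyR
  exact (mul_eq_zero.mp goal2).resolve_left h2D
end

section
/- For the second-order resonance model (q = 2), whose equilibria are the solutions u ∈ ℂ of 2u(δ − |u|²) + 2R·conj(u) = 0 with R > 0, the bifurcation diagram is: if δ < −R the only equilibrium is u = 0; if −R < δ < R the set of equilibria is exactly {0, √(δ+R), −√(δ+R)} (three points, the two nonzero ones lying on the real axis); and if δ > R the set of equilibria is exactly {0, √(δ+R), −√(δ+R), i√(δ−R), −i√(δ−R)} (five points, the two additional ones lying on the imaginary axis). -/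
open Complex Real

lemma eq_char (δ R : ℝ) (u : ℂ) :
    2 * u * ((δ : ℂ) - (normSq u : ℂ)) + 2 * (R : ℂ) * (starRingEnd ℂ u) = 0 ↔
    u.re * (δ - normSq u + R) = 0 ∧ u.im * (δ - normSq u - R) = 0 := by
  rw [Complex.ext_iff]
  simp only [Complex.add_re, Complex.add_im, Complex.mul_re, Complex.mul_im,
    Complex.sub_re, Complex.sub_im, Complex.ofReal_re, Complex.ofReal_im,
    Complex.conj_re, Complex.conj_im, Complex.zero_re, Complex.zero_im,
    Complex.re_ofNat, Complex.im_ofNat]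
  constructor
  · rintro ⟨h1, h2⟩
    constructor <;> nlinarith [h1, h2]
  · rintro ⟨h1, h2⟩
    constructor <;> nlinarith [h1, h2]

lemma normSq_real_ofReal (c : ℝ) : normSq (c : ℂ) = c * c := Complex.normSq_ofReal c

lemma normSq_I_mul (c : ℝ) : normSq (Complex.I * (c : ℂ)) = c * c := by
  simp [Complex.normSq_mul, Complex.normSq_ofReal]

/-- Bifurcation diagram of the equilibria of the second-order (`q = 2`) resonance model
`2u(δ − |u|²) + 2R·conj u = 0` with `R > 0`: one fixed point for `δ < −R`, three for
`−R < δ < R` (the nonzero ones on the real axis), five for `δ > R` (two additional ones on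
the imaginary axis). -/
theorem second_order_resonance_bifurcation
    (δ R : ℝ) (hR : 0 < R) :
    (δ < -R →
      {u : ℂ | 2 * u * ((δ : ℂ) - (normSq u : ℂ)) + 2 * (R : ℂ) * (starRingEnd ℂ u) = 0}
        = {0}) ∧
    (-R < δ → δ < R →
      {u : ℂ | 2 * u * ((δ : ℂ) - (normSq u : ℂ)) + 2 * (R : ℂ) * (starRingEnd ℂ u) = 0}
        = {0, (Real.sqrt (δ + R) : ℂ), -(Real.sqrt (δ + R) : ℂ)}) ∧
    (R < δ →
      {u : ℂ | 2 * u * ((δ : ℂ) - (normSq u : ℂ)) + 2 * (R : ℂ) * (starRingEnd ℂ u) = 0}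
        = {0, (Real.sqrt (δ + R) : ℂ), -(Real.sqrt (δ + R) : ℂ),
            Complex.I * (Real.sqrt (δ - R) : ℂ), -(Complex.I * (Real.sqrt (δ - R) : ℂ))}) := by
  refine ⟨?_, ?_, ?_⟩
  · -- δ < -R : only the origin
    intro hδ
    ext u
    simp only [Set.mem_setOf_eq, eq_char, Set.mem_singleton_iff]
    constructor
    · rintro ⟨h1, h2⟩
      have hs := Complex.normSq_nonneg u
      have hre : u.re = 0 := by
        rcases mul_eq_zero.mp h1 with h | h
        · exact h
        · nlinarith
      have him : u.im = 0 := by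
        rcases mul_eq_zero.mp h2 with h | h
        · exact h
        · nlinarith
      exact Complex.ext hre him
    · rintro rfl; simp
  · -- -R < δ < R : three equilibria
    intro h1δ h2δ
    have hδR : 0 ≤ δ + R := by linarith
    have hsq : Real.sqrt (δ + R) * Real.sqrt (δ + R) = δ + R := Real.mul_self_sqrt hδR
    ext u
    simp only [Set.mem_setOf_eq, eq_char, Set.mem_insert_iff, Set.mem_singleton_iff]
    constructor
    · rintro ⟨h1, h2⟩
      have hs := Complex.normSq_nonneg u
      have him : u.im = 0 := by
        rcases mul_eq_zero.mp h2 with h | h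
        · exact h
        · nlinarith
      have hns : normSq u = u.re * u.re := by
        rw [Complex.normSq_apply, him]; ring
      rcases mul_eq_zero.mp h1 with h | h
      · left; exact Complex.ext h him
      · have hr2 : u.re * u.re = δ + R := by rw [← hns]; linarith
        have habs : Real.sqrt (δ + R) = |u.re| := by
          rw [← hr2, ← Real.sqrt_sq_eq_abs, sq]
        rcases abs_cases u.re with ⟨ha, _⟩ | ⟨ha, _⟩
        · right; left
          refine Complex.ext ?_ ?_ <;> simp [him, habs, ha]
        · right; right
          refine Complex.ext ?_ ?_ <;> simp [him, habs, ha]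
    · rintro (rfl | rfl | rfl)
      · simp
      · refine ⟨?_, ?_⟩ <;> simp [Complex.normSq_ofReal, hsq]
      · refine ⟨?_, ?_⟩ <;>
          simp [Complex.normSq_ofReal, hsq, Complex.neg_re, Complex.neg_im]
  · -- R < δ : five equilibria
    intro hδ
    have hδR : 0 ≤ δ + R := by linarith
    have hδR' : 0 ≤ δ - R := by linarith
    have hsq : Real.sqrt (δ + R) * Real.sqrt (δ + R) = δ + R := Real.mul_self_sqrt hδR
    have hsq' : Real.sqrt (δ - R) * Real.sqrt (δ - R) = δ - R := Real.mul_self_sqrt hδR'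
    ext u
    simp only [Set.mem_setOf_eq, eq_char, Set.mem_insert_iff, Set.mem_singleton_iff]
    constructor
    · rintro ⟨h1, h2⟩
      by_cases him : u.im = 0
      · have hns : normSq u = u.re * u.re := by
          rw [Complex.normSq_apply, him]; ring
        rcases mul_eq_zero.mp h1 with h | h
        · left; exact Complex.ext h him
        · have hr2 : u.re * u.re = δ + R := by rw [← hns]; linarith
          have habs : Real.sqrt (δ + R) = |u.re| := by
            rw [← hr2, ← Real.sqrt_sq_eq_abs, sq]
          rcases abs_cases u.re with ⟨ha, _⟩ | ⟨ha, _⟩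
          · right; left
            refine Complex.ext ?_ ?_ <;> simp [him, habs, ha]
          · right; right; left
            refine Complex.ext ?_ ?_ <;> simp [him, habs, ha]
      · have hm : δ - normSq u - R = 0 := by
          rcases mul_eq_zero.mp h2 with h | h
          · exact absurd h him
          · exact h
        have hre : u.re = 0 := by
          rcases mul_eq_zero.mp h1 with h | h
          · exact h
          · nlinarith
        have hns : normSq u = u.im * u.im := by
          rw [Complex.normSq_apply, hre]; ring
        have hi2 : u.im * u.im = δ - R := by rw [← hns]; linarith
        have habs : Real.sqrt (δ - R) = |u.im| := by
          rw [← hi2, ← Real.sqrt_sq_eq_abs, sq]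
        rcases abs_cases u.im with ⟨ha, _⟩ | ⟨ha, _⟩
        · right; right; right; left
          refine Complex.ext ?_ ?_ <;>
            simp [hre, habs, ha, Complex.mul_re, Complex.mul_im]
        · right; right; right; right
          refine Complex.ext ?_ ?_ <;>
            simp [hre, habs, ha, Complex.mul_re, Complex.mul_im]
    · rintro (rfl | rfl | rfl | rfl | rfl)
      · simp
      · refine ⟨?_, ?_⟩ <;> simp [Complex.normSq_ofReal, hsq]
      · refine ⟨?_, ?_⟩ <;>
          simp [Complex.normSq_ofReal, hsq, Complex.neg_re, Complex.neg_im]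
      · refine ⟨?_, ?_⟩ <;>
          simp [normSq_I_mul, hsq', Complex.mul_re, Complex.mul_im]
      · refine ⟨?_, ?_⟩ <;>
          simp [normSq_I_mul, hsq', Complex.mul_re, Complex.mul_im,
            Complex.neg_re, Complex.neg_im]
end

section
/- (Sign criterion of Proposition 1.) Under the hypotheses of the averaged amplitude result — (θ, ε) a nonconstant P-periodic solution of θ̇ = −2ε, ε̇ = 2qRδ^{q/2}·sin(qθ) with δ > 0, R > 0, q > 0, and γ ∈ ℝ, T > 0 — the average over one period of F(t) = (2/(T·ΔH))·[(γ − 2)·δ·ε + ((1 + q/4)·γ − 2)·ε² + (q/4)·γ·ε³/δ] (with ΔH = 4Rδ^{q/2}) is strictly positive if and only if γ > 8/(4+q), strictly negative if and only if γ < 8/(4+q), and zero if and only if γ = 8/(4+q). In other words, under dissipation, the amplitude of libration grows on average when γ exceeds the critical value γ_c = 8/(4+q) and decays on average when γ is below it. -/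
open Real MeasureTheory intervalIntegral Set

lemma sin_lip_aux (a b : ℝ) : |Real.sin a - Real.sin b| ≤ |a - b| := by
  have h := Convex.norm_image_sub_le_of_norm_deriv_le (f := Real.sin) (s := Set.univ)
    (C := 1) (fun x _ => (Real.hasDerivAt_sin x).differentiableAt)
    (fun x _ => by simp [Real.deriv_sin, Real.norm_eq_abs, Real.abs_cos_le_one])
    convex_univ (Set.mem_univ b) (Set.mem_univ a)
  simpa [Real.norm_eq_abs] using h

set_option maxHeartbeats 1000000 in
/-- Sign criterion of Proposition 1: for a nonconstant periodic solution of the pendulum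
`θ̇ = −2ε`, `ε̇ = 2qRδ^(q/2)·sin(qθ)`, the average over one period of the dissipative
amplitude derivative `F = (2/(T·ΔH))·[(γ−2)δε + ((1+q/4)γ−2)ε² + (q/4)γε³/δ]`
is positive iff `γ > 8/(4+q)`, negative iff `γ < 8/(4+q)`, and zero iff `γ = 8/(4+q)`. -/
theorem amplitude_growth_criterion
    (δ R q γ T : ℝ) (hδ : 0 < δ) (hR : 0 < R) (hq : 0 < q) (hT : 0 < T)
    (θ ε : ℝ → ℝ) (P : ℝ) (hP : 0 < P)
    (hθ : ∀ t, HasDerivAt θ (-2 * ε t) t)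
    (hε : ∀ t, HasDerivAt ε (2 * q * R * δ ^ (q / 2) * Real.sin (q * θ t)) t)
    (hθper : θ P = θ 0) (hεper : ε P = ε 0)
    (hnonconst : ¬ (∀ t s : ℝ, θ t = θ s ∧ ε t = ε s)) :
    (0 < (1 / P) * ∫ t in (0 : ℝ)..P,
        (2 / (T * (4 * R * δ ^ (q / 2)))) *
          ((γ - 2) * δ * ε t + ((1 + q / 4) * γ - 2) * (ε t) ^ 2
            + q / 4 * γ * (ε t) ^ 3 / δ)
      ↔ 8 / (4 + q) < γ) ∧
    ((1 / P) * (∫ t in (0 : ℝ)..P,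
        (2 / (T * (4 * R * δ ^ (q / 2)))) *
          ((γ - 2) * δ * ε t + ((1 + q / 4) * γ - 2) * (ε t) ^ 2
            + q / 4 * γ * (ε t) ^ 3 / δ)) < 0
      ↔ γ < 8 / (4 + q)) ∧
    ((1 / P) * ∫ t in (0 : ℝ)..P,
        (2 / (T * (4 * R * δ ^ (q / 2)))) *
          ((γ - 2) * δ * ε t + ((1 + q / 4) * γ - 2) * (ε t) ^ 2
            + q / 4 * γ * (ε t) ^ 3 / δ)
      = 0 ↔ γ = 8 / (4 + q)) := by
  set D : ℝ := δ ^ (q / 2) with hD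
  have hDpos : 0 < D := Real.rpow_pos_of_pos hδ _
  have hεc : Continuous ε := continuous_iff_continuousAt.mpr fun t => (hε t).continuousAt
  have hθc : Continuous θ := continuous_iff_continuousAt.mpr fun t => (hθ t).continuousAt
  -- ∫ ε = 0
  have hI1 : (∫ t in (0:ℝ)..P, ε t) = 0 := by
    have h := intervalIntegral.integral_eq_sub_of_hasDerivAt (f := θ)
      (f' := fun t => -2 * ε t) (fun t _ => hθ t)
      ((continuous_const.mul hεc).intervalIntegrable 0 P)
    rw [hθper, sub_self, intervalIntegral.integral_const_mul] at h
    linarith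
  -- ∫ ε·cos(qθ) = 0
  have hIcos : (∫ t in (0:ℝ)..P, ε t * Real.cos (q * θ t)) = 0 := by
    have hderiv : ∀ t, HasDerivAt (fun t => Real.sin (q * θ t))
        ((-2*q) * (ε t * Real.cos (q * θ t))) t := by
      intro t
      have h1 : HasDerivAt (fun t => q * θ t) (q * (-2 * ε t)) t := (hθ t).const_mul q
      have h2 := (Real.hasDerivAt_sin (q * θ t)).comp t h1
      exact h2.congr_deriv (by ring)
    have h := intervalIntegral.integral_eq_sub_of_hasDerivAt (fun t _ => hderiv t)
      ((by continuity : Continuous fun t => (-2*q) * (ε t * Real.cos (q * θ t))).intervalIntegrable 0 P)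
    rw [hθper, sub_self, intervalIntegral.integral_const_mul] at h
    have hq' : (-2*q) ≠ 0 := by nlinarith
    exact (mul_eq_zero.mp h).resolve_left hq'
  -- energy conservation
  have hEderiv : ∀ t, HasDerivAt (fun t => (ε t)^2 - 2*R*D*Real.cos (q*θ t)) 0 t := by
    intro t
    have h1 := (hε t).pow 2
    have h2 : HasDerivAt (fun t => Real.cos (q * θ t)) (-Real.sin (q*θ t) * (q * (-2 * ε t))) t :=
      by have := (Real.hasDerivAt_cos (q * θ t)).comp t ((hθ t).const_mul q); exact this
    have h3 := h1.sub (h2.const_mul (2*R*D))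
    exact h3.congr_deriv (by norm_num; ring)
  have hEconst : ∀ t, (ε t)^2 - 2*R*D*Real.cos (q*θ t) = (ε 0)^2 - 2*R*D*Real.cos (q*θ 0) :=
    fun t => is_const_of_deriv_eq_zero (fun s => (hEderiv s).differentiableAt)
      (fun s => (hEderiv s).deriv) t 0
  -- ∫ ε³ = 0
  have hK : ∀ t, (ε t)^3 = ((ε 0)^2 - 2*R*D*Real.cos (q*θ 0)) * ε t
      + 2*R*D*(ε t * Real.cos (q*θ t)) := by
    intro t
    linear_combination (ε t) * (hEconst t)
  have hI3 : (∫ t in (0:ℝ)..P, (ε t)^3) = 0 := by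
    rw [intervalIntegral.integral_congr (g := fun t => ((ε 0)^2 - 2*R*D*Real.cos (q*θ 0)) * ε t
      + 2*R*D*(ε t * Real.cos (q*θ t))) (fun t _ => hK t)]
    rw [intervalIntegral.integral_add (f := fun t => ((ε 0)^2 - 2*R*D*Real.cos (q*θ 0)) * ε t)
      (g := fun t => 2*R*D*(ε t * Real.cos (q*θ t))) ((continuous_const.mul hεc).intervalIntegrable 0 P)
      ((continuous_const.mul (hεc.mul (by continuity))).intervalIntegrable 0 P),
      intervalIntegral.integral_const_mul, intervalIntegral.integral_const_mul, hI1, hIcos]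
    ring
  -- ∫ ε² > 0
  have hI2pos : 0 < ∫ t in (0:ℝ)..P, (ε t)^2 := by
    by_cases hz : ∀ t ∈ Ioo (0:ℝ) P, ε t = 0
    · exfalso
      apply hnonconst
      have ht₀ : P/2 ∈ Ioo (0:ℝ) P := ⟨by linarith, by linarith⟩
      have hε₀ : ε (P/2) = 0 := hz _ ht₀
      have hsin : Real.sin (q * θ (P/2)) = 0 := by
        have hloc : ε =ᶠ[nhds (P/2)] fun _ => 0 :=
          Filter.eventuallyEq_of_mem (Ioo_mem_nhds ht₀.1 ht₀.2) hz
        have hd0 : HasDerivAt ε 0 (P/2) :=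
          (hasDerivAt_const (P/2) (0:ℝ)).congr_of_eventuallyEq hloc
        have h0 : (0:ℝ) = 2*q*R*D * Real.sin (q * θ (P/2)) := hd0.unique (hε (P/2))
        have hc0 : (2*q*R*D) ≠ 0 := by positivity
        exact (mul_eq_zero.mp h0.symm).resolve_left hc0
      set c : ℝ := 2*q*R*D with hc
      have hcpos : 0 < c := by positivity
      have hlip : ∀ s : ℝ, LipschitzWith (Real.toNNReal (2 + c*q))
          (fun p : ℝ × ℝ => ((-2*p.2, c * Real.sin (q * p.1)) : ℝ × ℝ)) := by
        intro s
        apply LipschitzWith.of_dist_le_mul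
        intro x y
        have hco : ((Real.toNNReal (2 + c*q)) : ℝ) = 2 + c*q :=
          Real.coe_toNNReal _ (by positivity)
        rw [hco, Prod.dist_eq]
        have hd1 : dist x.1 y.1 ≤ dist x y := by rw [Prod.dist_eq]; exact le_max_left _ _
        have hd2 : dist x.2 y.2 ≤ dist x y := by rw [Prod.dist_eq]; exact le_max_right _ _
        have hdn : 0 ≤ dist x y := dist_nonneg
        apply max_le
        · show dist (-2*x.2) (-2*y.2) ≤ _
          rw [Real.dist_eq]
          have he : |(-2*x.2) - (-2*y.2)| = 2 * |x.2 - y.2| := by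
            rw [show (-2*x.2) - (-2*y.2) = (-2)*(x.2-y.2) by ring, abs_mul]; norm_num
          rw [he]
          have : |x.2 - y.2| = dist x.2 y.2 := (Real.dist_eq _ _).symm
          rw [this]
          linarith [mul_nonneg (mul_nonneg hcpos.le hq.le) hdn]
        · show dist (c * Real.sin (q*x.1)) (c * Real.sin (q*y.1)) ≤ _
          rw [Real.dist_eq]
          have h1 : |c * Real.sin (q*x.1) - c * Real.sin (q*y.1)| ≤ c * (q * |x.1 - y.1|) := by
            rw [← mul_sub, abs_mul, abs_of_pos hcpos]
            refine mul_le_mul_of_nonneg_left ?_ hcpos.le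
            calc |Real.sin (q*x.1) - Real.sin (q*y.1)| ≤ |q*x.1 - q*y.1| := sin_lip_aux _ _
              _ = q * |x.1 - y.1| := by
                  rw [show q*x.1 - q*y.1 = q*(x.1-y.1) by ring, abs_mul, abs_of_pos hq]
          have h2 : |x.1 - y.1| = dist x.1 y.1 := (Real.dist_eq _ _).symm
          rw [h2] at h1
          linarith [mul_le_mul_of_nonneg_left hd1 (mul_nonneg hcpos.le hq.le), hdn]
      have key : ∀ t : ℝ, θ t = θ (P/2) ∧ ε t = 0 := by
        intro t
        set a : ℝ := min t (P/2) - 1 with ha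
        set b : ℝ := max t (P/2) + 1 with hb
        have hta : a < t := by have := min_le_left t (P/2); simp only [ha]; linarith
        have htb : t < b := by have := le_max_left t (P/2); simp only [hb]; linarith
        have ht0a : a < P/2 := by have := min_le_right t (P/2); simp only [ha]; linarith
        have ht0b : P/2 < b := by have := le_max_right t (P/2); simp only [hb]; linarith
        have hval : ((-2*(0:ℝ), c * Real.sin (q * θ (P/2))) : ℝ × ℝ) = (0 : ℝ × ℝ) := by
          simp [hsin]
        have heq := ODE_solution_unique_of_mem_Ioo
          (v := fun _ (p : ℝ × ℝ) => ((-2*p.2, c * Real.sin (q * p.1)) : ℝ × ℝ))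
          (s := fun _ => (Set.univ : Set (ℝ × ℝ)))
          (fun s _ => (hlip s).lipschitzOnWith)
          (t₀ := P/2) (a := a) (b := b) ⟨ht0a, ht0b⟩
          (f := fun t => (θ t, ε t)) (g := fun _ => (θ (P/2), (0:ℝ)))
          (fun s _ => ⟨(hθ s).prodMk (hε s), trivial⟩)
          (fun s _ => ⟨by
            have h0 : HasDerivAt (fun _ : ℝ => ((θ (P/2), (0:ℝ)) : ℝ × ℝ))
                ((-2*(0:ℝ), c * Real.sin (q * θ (P/2))) : ℝ × ℝ) s := by
              rw [hval]; exact hasDerivAt_const _ _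
            exact h0, trivial⟩)
          (by simp [hε₀])
          ⟨hta, htb⟩
        exact ⟨congrArg Prod.fst heq, congrArg Prod.snd heq⟩
      exact fun t s => ⟨(key t).1.trans (key s).1.symm, (key t).2.trans (key s).2.symm⟩
    · push_neg at hz
      obtain ⟨t0, ht0mem, ht0⟩ := hz
      rw [intervalIntegral.integral_pos_iff_support_of_nonneg_ae
        (Filter.Eventually.of_forall fun t => sq_nonneg (ε t))
        ((hεc.pow 2).intervalIntegrable 0 P)]
      refine ⟨hP, ?_⟩
      have hopen : IsOpen ({t | ε t ≠ 0} ∩ Ioo 0 P) :=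
        (isOpen_compl_singleton.preimage hεc).inter isOpen_Ioo
      have hne : ({t | ε t ≠ 0} ∩ Ioo 0 P).Nonempty := ⟨t0, ht0, ht0mem⟩
      have hsub : ({t | ε t ≠ 0} ∩ Ioo 0 P) ⊆ Function.support (fun t => (ε t)^2) ∩ Ioc 0 P :=
        fun x hx => ⟨pow_ne_zero 2 hx.1, Ioo_subset_Ioc_self hx.2⟩
      exact lt_of_lt_of_le (hopen.measure_pos volume hne) (measure_mono hsub)
  -- main computation
  set k : ℝ := 2 / (T * (4 * R * D)) with hk
  have hkpos : 0 < k := by positivity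
  have hInt : (∫ t in (0:ℝ)..P, k * ((γ - 2) * δ * ε t + ((1 + q / 4) * γ - 2) * (ε t) ^ 2
      + q / 4 * γ * (ε t) ^ 3 / δ))
      = (k * ((1 + q / 4) * γ - 2)) * ∫ t in (0:ℝ)..P, (ε t)^2 := by
    have hptw : ∀ t, k * ((γ - 2) * δ * ε t + ((1 + q / 4) * γ - 2) * (ε t) ^ 2
        + q / 4 * γ * (ε t) ^ 3 / δ)
        = (k * (γ-2) * δ) * ε t + (k * ((1 + q / 4) * γ - 2)) * (ε t)^2
          + (k * (q/4*γ/δ)) * (ε t)^3 := fun t => by ring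
    rw [intervalIntegral.integral_congr (fun t _ => hptw t)]
    rw [intervalIntegral.integral_add (f := fun t => (k * (γ-2) * δ) * ε t + (k * ((1 + q / 4) * γ - 2)) * (ε t)^2)
        (g := fun t => (k * (q/4*γ/δ)) * (ε t)^3) (((continuous_const.mul hεc).add
        (continuous_const.mul (hεc.pow 2))).intervalIntegrable 0 P)
      ((continuous_const.mul (hεc.pow 3)).intervalIntegrable 0 P),
      intervalIntegral.integral_add (f := fun t => (k * (γ-2) * δ) * ε t)
        (g := fun t => (k * ((1 + q / 4) * γ - 2)) * (ε t)^2) ((continuous_const.mul hεc).intervalIntegrable 0 P)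
        ((continuous_const.mul (hεc.pow 2)).intervalIntegrable 0 P),
      intervalIntegral.integral_const_mul, intervalIntegral.integral_const_mul,
      intervalIntegral.integral_const_mul, hI1, hI3]
    ring
  rw [hInt]
  set I2 : ℝ := ∫ t in (0:ℝ)..P, (ε t)^2 with hI2
  have h4q : (0:ℝ) < 4 + q := by linarith
  have e1 : (8/(4+q) < γ) ↔ 0 < (1+q/4)*γ - 2 := by
    rw [div_lt_iff₀ h4q]
    constructor <;> intro h <;> nlinarith
  have e2 : (γ < 8/(4+q)) ↔ (1+q/4)*γ - 2 < 0 := by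
    rw [lt_div_iff₀ h4q]
    constructor <;> intro h <;> nlinarith
  have e3 : (γ = 8/(4+q)) ↔ (1+q/4)*γ - 2 = 0 := by
    rw [eq_div_iff h4q.ne']
    constructor <;> intro h
    · linear_combination h/4
    · linear_combination 4*h
  have hA : 0 < (1/P) * k * I2 := by
    apply mul_pos (mul_pos (by positivity) hkpos) hI2pos
  have hfact : ∀ x : ℝ, (1/P) * ((k * x) * I2) = ((1/P)*k*I2) * x := fun x => by ring
  refine ⟨?_, ?_, ?_⟩
  · rw [hfact, e1]
    constructor
    · intro h; nlinarith
    · intro h; exact mul_pos hA h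
  · rw [hfact, e2]
    constructor
    · intro h; nlinarith
    · intro h; exact mul_neg_of_pos_of_neg hA h
  · rw [hfact, e3]
    constructor
    · intro h; exact (mul_eq_zero.mp h).resolve_left hA.ne'
    · intro h; rw [h, mul_zero]
end

section
/- Let p, q be positive integers and let Λ₁, Λ₂ be nonnegative reals satisfying the normalization ((p+q)/p)·Λ₁ + Λ₂ = 1. Set G = Λ₁ + Λ₂, γ₁ = 2·((p+q)/p)·G and γ₂ = 2G. Then 2 ≤ γ₁ ≤ 2(p+q)/p and 2p/(p+q) ≤ γ₂ ≤ 2, with the lower bounds attained when Λ₂ = 0 appropriately (γ₁ = 2 when Λ₁ = p/(p+q), γ₂ = 2p/(p+q) when Λ₁ = p/(p+q)) and upper bounds when Λ₁ = 0. In particular γ₁ ≥ 2 > 8/(4+q) = γ_c always holds: when the tidal dissipation is dominated by the inner planet, the amplitude of libration always increases. -/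
open Real

/-- Bounds on the limiting dissipation balance parameters `γ₁ = 2((p+q)/p)G` and
`γ₂ = 2G` for a `(p+q):p` MMR with normalization `((p+q)/p)Λ₁ + Λ₂ = 1` and
`G = Λ₁ + Λ₂`: one has `2 ≤ γ₁ ≤ 2(p+q)/p` and `2p/(p+q) ≤ γ₂ ≤ 2`, the bounds being
attained at `Λ₁ = p/(p+q)` (i.e. `Λ₂ = 0`) and at `Λ₁ = 0`; in particular
`γ₁ ≥ 2 > 8/(4+q) = γ_c`, so when dissipation is dominated by the inner planet the
libration amplitude always grows. -/
theorem gamma_bounds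
    (p q : ℕ) (hp : 0 < p) (hq : 0 < q)
    (Λ₁ Λ₂ : ℝ) (hΛ₁ : 0 ≤ Λ₁) (hΛ₂ : 0 ≤ Λ₂)
    (hnorm : ((p : ℝ) + q) / p * Λ₁ + Λ₂ = 1) :
    (2 ≤ 2 * (((p : ℝ) + q) / p) * (Λ₁ + Λ₂)
      ∧ 2 * (((p : ℝ) + q) / p) * (Λ₁ + Λ₂) ≤ 2 * ((p : ℝ) + q) / p) ∧
    ((2 * p / ((p : ℝ) + q) ≤ 2 * (Λ₁ + Λ₂)) ∧ 2 * (Λ₁ + Λ₂) ≤ 2) ∧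
    (Λ₁ = (p : ℝ) / (p + q) →
      2 * (((p : ℝ) + q) / p) * (Λ₁ + Λ₂) = 2
        ∧ 2 * (Λ₁ + Λ₂) = 2 * p / ((p : ℝ) + q)) ∧
    (Λ₁ = 0 →
      2 * (((p : ℝ) + q) / p) * (Λ₁ + Λ₂) = 2 * ((p : ℝ) + q) / p
        ∧ 2 * (Λ₁ + Λ₂) = 2) ∧
    8 / (4 + (q : ℝ)) < 2 := by
  have hp' : (0 : ℝ) < p := by exact_mod_cast hp
  have hq' : (0 : ℝ) < q := by exact_mod_cast hq
  have hpq : (0 : ℝ) < (p : ℝ) + q := by linarith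
  have key : ((p : ℝ) + q) * Λ₁ + (p : ℝ) * Λ₂ = p := by
    have := hnorm
    field_simp at this
    linarith
  refine ⟨⟨?_, ?_⟩, ⟨?_, ?_⟩, ?_, ?_, ?_⟩
  · have e : 2 * (((p:ℝ)+q)/p) * (Λ₁+Λ₂) = (2*((p:ℝ)+q)*(Λ₁+Λ₂))/p := by ring
    rw [e, le_div_iff₀ hp']
    nlinarith
  · have e : 2 * (((p:ℝ)+q)/p) * (Λ₁+Λ₂) = (2*((p:ℝ)+q)*(Λ₁+Λ₂))/p := by ring
    rw [e, div_le_div_iff₀ hp' hp']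
    have hG : Λ₁ + Λ₂ ≤ 1 := by nlinarith
    nlinarith [mul_pos hpq hp']
  · rw [div_le_iff₀ hpq]
    nlinarith
  · nlinarith
  · intro h
    have hΛ₂0 : Λ₂ = 0 := by
      have : ((p : ℝ) + q) * Λ₁ = p := by
        rw [h]; field_simp
      nlinarith
    subst h; subst hΛ₂0
    constructor
    · field_simp; ring
    · field_simp; ring
  · intro h
    subst h
    have hΛ₂1 : Λ₂ = 1 := by linarith [hnorm, (by field_simp; ring : ((p:ℝ)+q)/p * 0 = 0)]
    subst hΛ₂1
    constructor
    · field_simp; ring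
    · norm_num
  · rw [div_lt_iff₀ (by linarith)]
    linarith
end
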